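/- Semigroup (Chapman–Kolmogorov) property of the Ehrenfest transition probabilities: for all i, j ∈ {0,1,…,N} and all s, t ≥ 0, p_{ij}(s+t) = Σ_{k=0}^{N} p_{ik}(s) · p_{kj}(t). -/

import Mathlib

open Finset Polynomial


/-- The Krawtchouk polynomial `K_l(x; N; p)`, defined via the hypergeometric sum. -/
noncomputable def krawtchouk (N : ℕ) (p : ℝ) (l x : ℕ) : ℝ :=
  ∑ k ∈ Finset.range (N + 1),
    ((ascPochhammer ℝ k).eval (-(l : ℝ)) * (ascPochhammer ℝ k).eval (-(x : ℝ))) /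
      ((ascPochhammer ℝ k).eval (-(N : ℝ)) * (Nat.factorial k : ℝ)) * (1 / p) ^ k

/-- Transition probabilities `p_{ij}(t)` of the continuous-time Ehrenfest process,
where `p = α/(α+β)` and `q = 1 - p`. -/
noncomputable def ehrenfestP (N : ℕ) (p q lam α β : ℝ) (i j : ℕ) (t : ℝ) : ℝ :=
  (N.choose j : ℝ) * (p / q) ^ j *
    ∑ x ∈ Finset.range (N + 1),
      (N.choose x : ℝ) * p ^ x * q ^ (N - x) * krawtchouk N p i x * krawtchouk N p j x *
        Real.exp (-(lam * (α + β) * (x : ℝ) * t))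

lemma poch_neg_nat (m k : ℕ) :
    (ascPochhammer ℝ k).eval (-(m : ℝ)) = (-1)^k * (k.factorial : ℝ) * (m.choose k : ℝ) := by
  rw [ascPochhammer_eval_neg_eq_descPochhammer, descPochhammer_eval_eq_descFactorial,
    Nat.descFactorial_eq_factorial_mul_choose]
  push_cast; ring

lemma kraw_symm (N : ℕ) (p : ℝ) (l x : ℕ) : krawtchouk N p l x = krawtchouk N p x l := by
  unfold krawtchouk
  exact Finset.sum_congr rfl fun k _ => by ring

lemma kraw_eq (N : ℕ) (p : ℝ) (l x : ℕ) :
    krawtchouk N p l x = ∑ k ∈ range (N+1),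
      (-1)^k * (l.choose k : ℝ) * (x.choose k : ℝ) / (N.choose k : ℝ) * (1/p)^k := by
  unfold krawtchouk
  refine Finset.sum_congr rfl fun k hk => ?_
  have hkN : k ≤ N := Nat.lt_succ_iff.mp (mem_range.mp hk)
  rw [poch_neg_nat, poch_neg_nat, poch_neg_nat]
  have h1 : (k.factorial : ℝ) ≠ 0 := Nat.cast_ne_zero.mpr k.factorial_ne_zero
  have h2 : (N.choose k : ℝ) ≠ 0 := Nat.cast_ne_zero.mpr (Nat.choose_pos hkN).ne'
  have h3 : ((-1 : ℝ))^k ≠ 0 := pow_ne_zero _ (by norm_num)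
  rcases neg_one_pow_eq_or ℝ k with h | h <;> rw [h] <;> field_simp <;>
  · rw [show ((k.factorial : ℝ) * (l.choose k) * ((k.factorial : ℝ) * (x.choose k))) =
        ((k.factorial : ℝ) * k.factorial) * ((l.choose k) * (x.choose k)) from by ring,
      show ((k.factorial : ℝ) * (N.choose k) * (k.factorial : ℝ) * p ^ k) =
        ((k.factorial : ℝ) * k.factorial) * ((N.choose k) * p ^ k) from by ring]
    first
      | exact mul_div_mul_left _ _ (mul_ne_zero h1 h1)
      | rw [div_neg, neg_div, neg_inj, mul_div_mul_left _ _ (mul_ne_zero h1 h1)]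

lemma GP_coeff_aux (N : ℕ) (p q : ℝ) (hp : p ≠ 0) (hpq : p + q = 1) (x : ℕ) (hx : x ≤ N)
    (n : ℕ) (hn : n ≤ N) :
    (((1 + X)^(N - x) * (1 - C (q/p) * X)^x : ℝ[X])).coeff n
      = ∑ a ∈ range (x+1),
          (x.choose a : ℝ) * (-(1/p))^a * (if a ≤ n then ((N-a).choose (n-a) : ℝ) else 0) := by
  have h1 : (1 - C (q/p) * X : ℝ[X]) = C (-(1/p)) * X + (1 + X) := by
    rw [show (-(1/p) : ℝ) = -(q/p) - 1 by field_simp; linarith, map_sub, map_neg, map_one]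
    ring
  rw [h1, add_pow (C (-(1/p)) * X) (1 + X) x, Finset.mul_sum, finset_sum_coeff]
  refine Finset.sum_congr rfl fun a ha => ?_
  have hax : a ≤ x := Nat.lt_succ_iff.mp (mem_range.mp ha)
  have hterm : ((1 + X)^(N - x) * ((C (-(1/p)) * X)^a * (1+X)^(x-a) * (x.choose a : ℝ[X])) : ℝ[X])
      = C ((x.choose a : ℝ) * (-(1/p))^a) * ((1+X)^(N-a) * X^a) := by
    rw [show N - a = (N - x) + (x - a) from by omega, pow_add, mul_pow, map_mul, map_pow,
      show ((x.choose a : ℕ) : ℝ[X]) = C ((x.choose a : ℕ) : ℝ) from by simp]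
    ring
  rw [hterm, coeff_C_mul, coeff_mul_X_pow']
  by_cases han : a ≤ n <;> simp [han, coeff_one_add_X_pow, mul_assoc]

lemma GP_coeff (N : ℕ) (p q : ℝ) (hp : p ≠ 0) (hpq : p + q = 1) (x : ℕ) (hx : x ≤ N)
    (n : ℕ) (hn : n ≤ N) :
    (((1 + X)^(N - x) * (1 - C (q/p) * X)^x : ℝ[X])).coeff n
      = (N.choose n : ℝ) * krawtchouk N p n x := by
  rw [GP_coeff_aux N p q hp hpq x hx n hn, kraw_eq, Finset.mul_sum]
  rw [Finset.sum_subset (Finset.range_subset_range.mpr (by omega : x + 1 ≤ N + 1))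
    (fun a _ ha => by
      have : x < a := by simpa using ha
      simp [Nat.choose_eq_zero_of_lt this])]
  refine Finset.sum_congr rfl fun a ha => ?_
  have haN : a ≤ N := Nat.lt_succ_iff.mp (mem_range.mp ha)
  by_cases han : a ≤ n
  · have key : N.choose n * n.choose a = N.choose a * ((N-a).choose (n-a)) :=
      Nat.choose_mul han
    have keyR : ((N.choose n : ℝ)) * (n.choose a : ℝ)
        = (N.choose a : ℝ) * (((N-a).choose (n-a) : ℕ) : ℝ) := by exact_mod_cast key
    have hNa : ((N.choose a : ℝ)) ≠ 0 := Nat.cast_ne_zero.mpr (Nat.choose_pos haN).ne'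
    rw [if_pos han, neg_pow]
    field_simp
    linear_combination (-(x.choose a : ℝ)) * keyR
  · rw [if_neg han, Nat.choose_eq_zero_of_lt (by omega : n < a)]
    simp

lemma kraw_GF (N : ℕ) (p q : ℝ) (hp : p ≠ 0) (hpq : p + q = 1) :
    ∑ x ∈ range (N+1),
      (Polynomial.C (Polynomial.C ((N.choose x : ℝ) * p^x * q^(N-x))) *
        (Polynomial.C ((1 + X)^(N - x) * (1 - C (q/p) * X)^x) *
          Polynomial.map Polynomial.C ((1 + X)^(N - x) * (1 - C (q/p) * X)^x)))
      = (1 + Polynomial.C (Polynomial.C (q/p)) * (Polynomial.C (X : ℝ[X]) * X))^N := by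
  have h1 : (C (C p) + C (C q) : (ℝ[X])[X]) = 1 := by
    rw [← C_add, ← C_add, hpq, C_1, C_1]
  have hpc : p * (q/p) = q := by field_simp
  have h2 : (C (C p) * C (C (q/p)) : (ℝ[X])[X]) = C (C q) := by
    rw [← C_mul, ← C_mul, hpc]
  have key : (C (C p) * ((1 - C (C (q/p)) * C X) * (1 - C (C (q/p)) * X)) +
      C (C q) * ((1 + C X) * (1 + X)) : (ℝ[X])[X])
      = 1 + C (C (q/p)) * (C (X : ℝ[X]) * X) := by
    linear_combination (1 + C (X:ℝ[X]) * X * C (C (q/p))) * h1 +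
      (C (X:ℝ[X]) * X * (C (C (q/p)) - 1) - C (X:ℝ[X]) - X) * h2
  rw [← key, add_pow]
  refine Finset.sum_congr rfl fun x hx => ?_
  simp only [Polynomial.map_mul, Polynomial.map_pow, Polynomial.map_sub, Polynomial.map_add,
    Polynomial.map_one, map_mul, map_pow, map_sub, map_add, map_one, map_natCast, map_C,
    Polynomial.map_X, mul_pow]
  ring

lemma kraw_orth (N : ℕ) (p q : ℝ) (hp : p ≠ 0) (hpq : p + q = 1) (m n : ℕ)
    (hm : m ≤ N) (hn : n ≤ N) :
    ∑ x ∈ range (N+1),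
        (N.choose x : ℝ) * p^x * q^(N-x) * (krawtchouk N p m x * krawtchouk N p n x)
      = if m = n then (q/p)^n / (N.choose n : ℝ) else 0 := by
  have hCm : ((N.choose m : ℕ) : ℝ) ≠ 0 := Nat.cast_ne_zero.mpr (Nat.choose_pos hm).ne'
  have hCn : ((N.choose n : ℕ) : ℝ) ≠ 0 := Nat.cast_ne_zero.mpr (Nat.choose_pos hn).ne'
  have h2 := congrArg (fun P : (ℝ[X])[X] => (P.coeff n).coeff m) (kraw_GF N p q hp hpq)
  simp only [finset_sum_coeff, coeff_C_mul, coeff_map, coeff_mul_C] at h2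
  apply mul_left_cancel₀ (mul_ne_zero hCm hCn)
  have hL : ((N.choose m : ℝ) * (N.choose n : ℝ)) * (∑ x ∈ range (N+1),
        (N.choose x : ℝ) * p^x * q^(N-x) * (krawtchouk N p m x * krawtchouk N p n x))
      = ∑ x ∈ range (N+1), (N.choose x : ℝ) * p ^ x * q ^ (N - x) *
          ((((1 + X) ^ (N - x) * (1 - C (q / p) * X) ^ x : ℝ[X])).coeff m *
           (((1 + X) ^ (N - x) * (1 - C (q / p) * X) ^ x : ℝ[X])).coeff n) := by
    rw [Finset.mul_sum]
    refine Finset.sum_congr rfl fun x hx => ?_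
    have hxN : x ≤ N := Nat.lt_succ_iff.mp (mem_range.mp hx)
    rw [GP_coeff N p q hp hpq x hxN m hm, GP_coeff N p q hp hpq x hxN n hn]
    ring
  rw [hL, h2, add_comm (1 : (ℝ[X])[X]) _, add_pow]
  simp only [one_pow, mul_one, finset_sum_coeff]
  have hstep : ∀ k : ℕ, ((C (C (q/p)) * (C (X:ℝ[X]) * X))^k * ((N.choose k : ℕ) : (ℝ[X])[X]))
      = C (C ((N.choose k : ℝ) * (q/p)^k) * X^k) * X^k := by
    intro k
    simp only [map_mul, map_natCast, map_pow]
    rw [mul_pow, mul_pow]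
    ring
  rw [Finset.sum_congr rfl (fun k _ => by
    rw [hstep k, coeff_C_mul, coeff_X_pow, mul_ite, mul_one, mul_zero])]
  simp only [apply_ite (fun f : ℝ[X] => f.coeff m), coeff_zero]
  rw [Finset.sum_ite_eq (range (N+1)) n _, if_pos (mem_range.mpr (by omega))]
  rw [coeff_C_mul, coeff_X_pow, mul_ite, mul_one, mul_zero]
  split_ifs with h
  · subst h
    field_simp
  · ring

lemma kraw_orth_dual (N : ℕ) (p q : ℝ) (hp : p ≠ 0) (hq : q ≠ 0) (hpq : p + q = 1)
    (x y : ℕ) (hx : x ≤ N) (hy : y ≤ N) :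
    ∑ k ∈ range (N+1),
        (N.choose k : ℝ) * (p/q)^k * (krawtchouk N p k x * krawtchouk N p k y)
      = if x = y then 1 / ((N.choose x : ℝ) * p^x * q^(N-x)) else 0 := by
  have hqN : q^N ≠ 0 := pow_ne_zero _ hq
  have h1 : ∑ k ∈ range (N+1),
        (N.choose k : ℝ) * (p/q)^k * (krawtchouk N p k x * krawtchouk N p k y)
      = (1/q^N) * ∑ k ∈ range (N+1),
        (N.choose k : ℝ) * p^k * q^(N-k) * (krawtchouk N p x k * krawtchouk N p y k) := by
    rw [Finset.mul_sum]
    refine Finset.sum_congr rfl fun k hk => ?_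
    have hkN : k ≤ N := Nat.lt_succ_iff.mp (mem_range.mp hk)
    rw [kraw_symm N p k x, kraw_symm N p k y]
    have hqpow : q^(N-k) * q^k = q^N := by rw [← pow_add]; congr 1; omega
    have hqk : q^k ≠ 0 := pow_ne_zero _ hq
    rw [← hqpow, div_pow]
    field_simp
  rw [h1, kraw_orth N p q hp hpq x y hx hy]
  have hCx : ((N.choose x : ℕ) : ℝ) ≠ 0 := Nat.cast_ne_zero.mpr (Nat.choose_pos hx).ne'
  split_ifs with h
  · subst h
    have hqpow : q^(N-x) * q^x = q^N := by rw [← pow_add]; congr 1; omega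
    have hpx : p^x ≠ 0 := pow_ne_zero _ hp
    have hqx : q^x ≠ 0 := pow_ne_zero _ hq
    rw [← hqpow, div_pow]
    field_simp
  · ring

/-- Semigroup (Chapman–Kolmogorov) property of the Ehrenfest transition probabilities. -/
theorem ehrenfest_chapman_kolmogorov (N : ℕ) (lam α β : ℝ) (hlam : 0 < lam)
    (hα : α ∈ Set.Ioc (0 : ℝ) 1) (hβ : β ∈ Set.Ioc (0 : ℝ) 1)
    (p q : ℝ) (hp : p = α / (α + β)) (hq : q = 1 - p)
    (i j : ℕ) (hi : i ≤ N) (hj : j ≤ N) (s t : ℝ) (hs : 0 ≤ s) (ht : 0 ≤ t) :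
    ehrenfestP N p q lam α β i j (s + t) =
      ∑ k ∈ Finset.range (N + 1),
        ehrenfestP N p q lam α β i k s * ehrenfestP N p q lam α β k j t := by
  have hab : 0 < α + β := add_pos hα.1 hβ.1
  have hp0 : 0 < p := by rw [hp]; exact div_pos hα.1 hab
  have hq0 : 0 < q := by
    rw [hq, hp]
    have h1 : α / (α + β) < 1 := (div_lt_one hab).mpr (by linarith [hβ.1])
    linarith
  have hpq : p + q = 1 := by rw [hq]; ring
  have hp' : p ≠ 0 := hp0.ne'
  have hq' : q ≠ 0 := hq0.ne'
  have hw0 : ∀ x, x ≤ N → ((N.choose x : ℝ) * p ^ x * q ^ (N - x)) ≠ 0 := fun x hx =>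
    mul_ne_zero (mul_ne_zero (Nat.cast_ne_zero.mpr (Nat.choose_pos hx).ne')
      (pow_ne_zero _ hp')) (pow_ne_zero _ hq')
  simp only [ehrenfestP]
  calc (N.choose j : ℝ) * (p / q) ^ j *
      ∑ x ∈ Finset.range (N + 1),
        (N.choose x : ℝ) * p ^ x * q ^ (N - x) * krawtchouk N p i x * krawtchouk N p j x *
          Real.exp (-(lam * (α + β) * (x : ℝ) * (s + t)))
      = ∑ x ∈ range (N+1), ∑ y ∈ range (N+1),
          (if x = y then 1 / ((N.choose x : ℝ) * p ^ x * q ^ (N - x)) else 0) *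
            (((N.choose x : ℝ) * p ^ x * q ^ (N - x) * krawtchouk N p i x *
                Real.exp (-(lam * (α + β) * (x : ℝ) * s))) *
             ((N.choose j : ℝ) * (p / q) ^ j *
               ((N.choose y : ℝ) * p ^ y * q ^ (N - y) * krawtchouk N p j y *
                 Real.exp (-(lam * (α + β) * (y : ℝ) * t))))) := by
        rw [Finset.mul_sum]
        refine Finset.sum_congr rfl fun x hx => ?_
        rw [Finset.sum_eq_single_of_mem x hx (fun y _ hyx => by
          rw [if_neg (fun h => hyx h.symm), zero_mul]), if_pos rfl]
        have hx' : x ≤ N := Nat.lt_succ_iff.mp (mem_range.mp hx)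
        have hE : Real.exp (-(lam * (α + β) * (x : ℝ) * s)) *
            Real.exp (-(lam * (α + β) * (x : ℝ) * t))
            = Real.exp (-(lam * (α + β) * (x : ℝ) * (s + t))) := by
          rw [← Real.exp_add]; ring_nf
        rw [← hE]
        field_simp [hw0 x hx']
    _ = ∑ x ∈ range (N+1), ∑ y ∈ range (N+1),
          (∑ k ∈ range (N+1), (N.choose k : ℝ) * (p/q)^k *
              (krawtchouk N p k x * krawtchouk N p k y)) *
            (((N.choose x : ℝ) * p ^ x * q ^ (N - x) * krawtchouk N p i x *
                Real.exp (-(lam * (α + β) * (x : ℝ) * s))) *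
             ((N.choose j : ℝ) * (p / q) ^ j *
               ((N.choose y : ℝ) * p ^ y * q ^ (N - y) * krawtchouk N p j y *
                 Real.exp (-(lam * (α + β) * (y : ℝ) * t))))) := by
        refine Finset.sum_congr rfl fun x hx => Finset.sum_congr rfl fun y hy => ?_
        rw [kraw_orth_dual N p q hp' hq' hpq x y
          (Nat.lt_succ_iff.mp (mem_range.mp hx)) (Nat.lt_succ_iff.mp (mem_range.mp hy))]
    _ = ∑ x ∈ range (N+1), ∑ y ∈ range (N+1), ∑ k ∈ range (N+1),
          ((N.choose k : ℝ) * (p / q) ^ k *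
              ((N.choose x : ℝ) * p ^ x * q ^ (N - x) * krawtchouk N p i x * krawtchouk N p k x *
                Real.exp (-(lam * (α + β) * (x : ℝ) * s)))) *
            ((N.choose j : ℝ) * (p / q) ^ j *
              ((N.choose y : ℝ) * p ^ y * q ^ (N - y) * krawtchouk N p k y * krawtchouk N p j y *
                Real.exp (-(lam * (α + β) * (y : ℝ) * t)))) := by
        refine Finset.sum_congr rfl fun x hx => Finset.sum_congr rfl fun y hy => ?_
        rw [Finset.sum_mul]
        exact Finset.sum_congr rfl fun k hk => by ring
    _ = ∑ k ∈ range (N+1), ∑ x ∈ range (N+1), ∑ y ∈ range (N+1),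
          ((N.choose k : ℝ) * (p / q) ^ k *
              ((N.choose x : ℝ) * p ^ x * q ^ (N - x) * krawtchouk N p i x * krawtchouk N p k x *
                Real.exp (-(lam * (α + β) * (x : ℝ) * s)))) *
            ((N.choose j : ℝ) * (p / q) ^ j *
              ((N.choose y : ℝ) * p ^ y * q ^ (N - y) * krawtchouk N p k y * krawtchouk N p j y *
                Real.exp (-(lam * (α + β) * (y : ℝ) * t)))) := by
        rw [Finset.sum_congr rfl fun x (_ : x ∈ range (N+1)) => Finset.sum_comm,
          Finset.sum_comm]
    _ = ∑ k ∈ Finset.range (N + 1),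
        ((N.choose k : ℝ) * (p / q) ^ k *
          ∑ x ∈ Finset.range (N + 1),
            (N.choose x : ℝ) * p ^ x * q ^ (N - x) * krawtchouk N p i x * krawtchouk N p k x *
              Real.exp (-(lam * (α + β) * (x : ℝ) * s))) *
        ((N.choose j : ℝ) * (p / q) ^ j *
          ∑ y ∈ Finset.range (N + 1),
            (N.choose y : ℝ) * p ^ y * q ^ (N - y) * krawtchouk N p k y * krawtchouk N p j y *
              Real.exp (-(lam * (α + β) * (y : ℝ) * t))) := by
        refine Finset.sum_congr rfl fun k hk => Eq.symm ?_
        rw [Finset.mul_sum, Finset.mul_sum, Finset.sum_mul_sum]
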